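/- Suppose \varphi_1 \sigma > 1. Let p^0 = (p^0_1, p^0_2) \in (0,1)^2 with p^0_1 + p^0_2 \le 1, let p^k = h^k(p^0), and set r = \inf\{\lambda_1(p) : 0 < p_1 \le \bar{p}_1,\ 0 \le p_2 \le \bar{p}_2\}. Then there exists \bar{c} \in (0, p^0_1) such that for every c \le \bar{c} there is \bar{k} \in \mathbb{N} with the property: for all n \in \mathbb{N}, if p^n_1 \ge c then there exists k \le \bar{k} with p^{n+k}_1 > (3/(2r)) c. -/

import Mathlib

/-- `g α x` : the expected density after the epidemic stage on a percolated 3-tree. -/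
noncomputable def g (α x : ℝ) : ℝ :=
  if x = 0 then 0
  else (1 - Real.sqrt (1 - 4 * (1 - α) * x * (1 - x))) ^ 3 / (8 * (1 - α) ^ 2 * x ^ 2)

/-- `ψ(x) = (1 - e^{-x})/x`, with `ψ(0) = 1`. -/
noncomputable def psi (x : ℝ) : ℝ := if x = 0 then 1 else (1 - Real.exp (-x)) / x

/-- `Σ_p = β₁ p₁ + β₂ p₂`. -/
noncomputable def Sig (β₁ β₂ : ℝ) (p : ℝ × ℝ) : ℝ := β₁ * p.1 + β₂ * p.2

/-- Growth map, first type. -/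
noncomputable def f1 (β₁ β₂ : ℝ) (p : ℝ × ℝ) : ℝ :=
  if Sig β₁ β₂ p = 0 then 0
  else (1 - Real.exp (-Sig β₁ β₂ p)) * (β₁ * p.1) / Sig β₁ β₂ p

/-- Growth map, second type. -/
noncomputable def f2 (β₁ β₂ : ℝ) (p : ℝ × ℝ) : ℝ :=
  if Sig β₁ β₂ p = 0 then 0
  else (1 - Real.exp (-Sig β₁ β₂ p)) * (β₂ * p.2) / Sig β₁ β₂ p

/-- The two-type limiting map. -/
noncomputable def hmap (α₁ α₂ β₁ β₂ : ℝ) (p : ℝ × ℝ) : ℝ × ℝ :=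
  (g α₁ (f1 β₁ β₂ p), g α₂ (f2 β₁ β₂ p))

/-- `λ₁(p) = h₁(p)/p₁` (for `p₁ > 0`). -/
noncomputable def lam1 (α₁ β₁ β₂ : ℝ) (p : ℝ × ℝ) : ℝ := g α₁ (f1 β₁ β₂ p) / p.1

/-- `pbar α = sup_{x ∈ [0,1]} g α x`. -/
noncomputable def pbar (α : ℝ) : ℝ := sSup (g α '' Set.Icc 0 1)

/-- The one-type map for the strong species alone: `t(x) = g_{α₂}(1 - e^{-β₂ x})`. -/
noncomputable def tmap (α₂ β₂ : ℝ) (x : ℝ) : ℝ := g α₂ (1 - Real.exp (-(β₂ * x)))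

/-- `σ = inf_{x ∈ [0,p̄₂]} liminf_n (∏_{k<n} ψ(β₂ tᵏ(x)))^{1/n}`. -/
noncomputable def sigma (α₂ β₂ : ℝ) : ℝ :=
  sInf ((fun x => Filter.liminf
      (fun n : ℕ => (∏ k ∈ Finset.range n, psi (β₂ * (tmap α₂ β₂)^[k] x)) ^ (1 / (n : ℝ)))
      Filter.atTop) '' Set.Icc 0 (pbar α₂))

/-- `r = inf { λ₁(p) : 0 < p₁ ≤ p̄₁, 0 ≤ p₂ ≤ p̄₂ }`. -/
noncomputable def rconst (α₁ α₂ β₁ β₂ : ℝ) : ℝ :=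
  sInf {y : ℝ | ∃ p : ℝ × ℝ, 0 < p.1 ∧ p.1 ≤ pbar α₁ ∧ 0 ≤ p.2 ∧ p.2 ≤ pbar α₂ ∧
    y = lam1 α₁ β₁ β₂ p}

/-! ### Basic facts about `psi` -/

lemma psi_of_ne (x : ℝ) (hx : x ≠ 0) : psi x = (1 - Real.exp (-x)) / x := by
  simp [psi, hx]

lemma psi_le_one {x : ℝ} (hx : 0 ≤ x) : psi x ≤ 1 := by
  rcases eq_or_lt_of_le hx with h | h
  · simp [psi, ← h]
  · rw [psi_of_ne x (ne_of_gt h), div_le_one h]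
    nlinarith [Real.add_one_le_exp (-x)]

lemma exp_neg_le_psi {x : ℝ} (hx : 0 ≤ x) : Real.exp (-x) ≤ psi x := by
  rcases eq_or_lt_of_le hx with h | h
  · simp [psi, ← h, Real.exp_nonneg]
  · rw [psi_of_ne x (ne_of_gt h), le_div_iff₀ h]
    rw [Real.exp_neg]
    have hE := Real.exp_pos x
    rw [inv_mul_le_iff₀ hE, ← sub_nonneg]
    have h2 : Real.exp x * (1 - (Real.exp x)⁻¹) = Real.exp x - 1 := by
      field_simp
    rw [h2]
    nlinarith [Real.add_one_le_exp x]

lemma psi_pos {x : ℝ} (hx : 0 ≤ x) : 0 < psi x :=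
  lt_of_lt_of_le (Real.exp_pos _) (exp_neg_le_psi hx)

lemma psi_eq_integral (x : ℝ) : psi x = ∫ t in (0:ℝ)..1, Real.exp (-(x * t)) := by
  rcases eq_or_ne x 0 with h | h
  · simp [psi, h]
  · have hd : ∀ t ∈ Set.uIcc (0:ℝ) 1, HasDerivAt (fun t => -(1/x) * Real.exp (-(x*t)))
        (Real.exp (-(x*t))) t := by
      intro t _
      have h1 : HasDerivAt (fun t : ℝ => -(x*t)) (-x) t := by
        simpa using ((hasDerivAt_id t).const_mul (-x))
      have h2 := (Real.hasDerivAt_exp (-(x*t))).comp t h1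
      have h3 := h2.const_mul (-(1/x))
      refine h3.congr_deriv ?_
      field_simp
    have hint : IntervalIntegrable (fun t => Real.exp (-(x*t))) MeasureTheory.volume 0 1 := by
      apply Continuous.intervalIntegrable
      continuity
    have := intervalIntegral.integral_eq_sub_of_hasDerivAt hd hint
    rw [this, psi_of_ne x h]
    field_simp [Real.exp_neg]
    simp
    ring

lemma psi_antitone {x y : ℝ} (hx : 0 ≤ x) (hxy : x ≤ y) : psi y ≤ psi x := by
  rw [psi_eq_integral, psi_eq_integral]
  apply intervalIntegral.integral_mono_on zero_le_one
  · apply Continuous.intervalIntegrable; continuity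
  · apply Continuous.intervalIntegrable; continuity
  · intro t ht
    apply Real.exp_le_exp.2
    simp only [neg_le_neg_iff]
    exact mul_le_mul_of_nonneg_right hxy ht.1

lemma psi_lip {x y : ℝ} (hx : 0 ≤ x) (hxy : x ≤ y) : psi x - psi y ≤ y - x := by
  rw [psi_eq_integral, psi_eq_integral, ← intervalIntegral.integral_sub]
  · have h2 : (∫ _t in (0:ℝ)..1, (y - x)) = y - x := by simp
    rw [← h2]
    apply intervalIntegral.integral_mono_on zero_le_one
    · apply Continuous.intervalIntegrable; continuity
    · apply Continuous.intervalIntegrable; continuity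
    · intro t ht
      have e1 : Real.exp (-(y*t)) = Real.exp (-(x*t)) * Real.exp (-((y-x)*t)) := by
        rw [← Real.exp_add]; ring_nf
      have e2 : Real.exp (-(x*t)) ≤ 1 := by
        apply Real.exp_le_one_iff.2
        simp only [neg_nonpos]; exact mul_nonneg hx ht.1
      have e3 : 1 - (y-x)*t ≤ Real.exp (-((y-x)*t)) := by
        have := Real.add_one_le_exp (-((y-x)*t)); linarith
      have e4 : (y-x)*t ≤ (y-x)*1 := by
        apply mul_le_mul_of_nonneg_left ht.2 (by linarith)
      have e5 : 0 < Real.exp (-(x*t)) := Real.exp_pos _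
      nlinarith [Real.exp_pos (-((y-x)*t))]
  · apply Continuous.intervalIntegrable; continuity
  · apply Continuous.intervalIntegrable; continuity

lemma psi_abs_lip {x y : ℝ} (hx : 0 ≤ x) (hy : 0 ≤ y) : |psi x - psi y| ≤ |x - y| := by
  rcases le_total x y with h | h
  · rw [abs_of_nonneg (by linarith [psi_antitone hx h]), abs_of_nonpos (by linarith : x - y ≤ 0)]
    have := psi_lip hx h; linarith
  · rw [abs_of_nonpos (by linarith [psi_antitone hy h]), abs_of_nonneg (by linarith : 0 ≤ x - y)]
    have := psi_lip hy h; linarith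

/-! ### Basic facts about `g` -/

section gbounds
variable {α x : ℝ} (hα : α ∈ Set.Ico (0:ℝ) 1) (hx0 : 0 ≤ x) (hx1 : x ≤ 1)
include hα hx0 hx1

lemma u_mem : 0 ≤ 4 * (1 - α) * x * (1 - x) ∧ 4 * (1 - α) * x * (1 - x) ≤ 1 := by
  obtain ⟨h0, h1⟩ := hα
  constructor
  · have h1x : 0 ≤ 1 - x := by linarith
    have h1a : 0 ≤ 1 - α := by linarith
    positivity
  · nlinarith [sq_nonneg (2*x - 1)]

lemma sqrt_ub : Real.sqrt (1 - 4 * (1 - α) * x * (1 - x)) ≤ 1 - (4 * (1 - α) * x * (1 - x))/2 := by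
  obtain ⟨hu0, hu1⟩ := u_mem hα hx0 hx1
  set u := 4 * (1 - α) * x * (1 - x)
  have : (1 : ℝ) - u ≤ (1 - u/2)^2 := by nlinarith
  calc Real.sqrt (1 - u) ≤ Real.sqrt ((1 - u/2)^2) := Real.sqrt_le_sqrt this
    _ = 1 - u/2 := by rw [Real.sqrt_sq (by linarith)]

lemma sqrt_lb : 1 - (4*(1-α)*x*(1-x))/2 - (4*(1-α)*x*(1-x))^2/2 ≤
    Real.sqrt (1 - 4 * (1 - α) * x * (1 - x)) := by
  obtain ⟨hu0, hu1⟩ := u_mem hα hx0 hx1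
  set u := 4 * (1 - α) * x * (1 - x)
  rcases le_or_gt (1 - u/2 - u^2/2) 0 with h | h
  · exact le_trans h (Real.sqrt_nonneg _)
  · rw [show (1:ℝ) - u/2 - u^2/2 = 1 - u/2 - u^2/2 by ring]
    apply Real.le_sqrt' h |>.2
    nlinarith

lemma g_lb : (1 - α) * x * (1 - x)^3 ≤ g α x := by
  obtain ⟨h0, h1⟩ := hα
  rcases eq_or_lt_of_le hx0 with h | hxpos
  · simp [g, ← h]
  rw [g, if_neg (ne_of_gt hxpos)]
  obtain ⟨hu0, hu1⟩ := u_mem ⟨h0, h1⟩ hx0 hx1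
  have hs := sqrt_ub ⟨h0, h1⟩ hx0 hx1
  set u := 4 * (1 - α) * x * (1 - x) with hu
  have hnum : (u/2)^3 ≤ (1 - Real.sqrt (1 - u))^3 := by
    apply pow_le_pow_left₀ (by linarith) (by linarith)
  have hden : (0:ℝ) < 8 * (1 - α)^2 * x^2 :=
    mul_pos (mul_pos (by norm_num) (pow_pos (by linarith) 2)) (pow_pos hxpos 2)
  rw [le_div_iff₀ hden]
  calc (1 - α) * x * (1 - x)^3 * (8 * (1 - α)^2 * x^2) = (u/2)^3 := by rw [hu]; ring
    _ ≤ _ := hnum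

lemma g_ub : g α x ≤ (1 - α) * x * (1 + 4*x)^3 := by
  obtain ⟨h0, h1⟩ := hα
  rcases eq_or_lt_of_le hx0 with h | hxpos
  · simp [g, ← h]
  rw [g, if_neg (ne_of_gt hxpos)]
  obtain ⟨hu0, hu1⟩ := u_mem ⟨h0, h1⟩ hx0 hx1
  have hs := sqrt_lb ⟨h0, h1⟩ hx0 hx1
  set u := 4 * (1 - α) * x * (1 - x) with hu
  have h2 : 1 - Real.sqrt (1 - u) ≤ u/2 * (1 + u) := by nlinarith
  have hnum : (1 - Real.sqrt (1 - u))^3 ≤ (u/2 * (1+u))^3 := by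
    apply pow_le_pow_left₀ _ h2
    have := Real.sqrt_le_one.2 (by linarith : (1:ℝ) - u ≤ 1)
    linarith
  have hden : (0:ℝ) < 8 * (1 - α)^2 * x^2 :=
    mul_pos (mul_pos (by norm_num) (pow_pos (by linarith) 2)) (pow_pos hxpos 2)
  rw [div_le_iff₀ hden]
  calc (1 - Real.sqrt (1 - u))^3 ≤ (u/2 * (1+u))^3 := hnum
    _ = (1-α) * x * ((1-x)*(1+u))^3 * (8 * (1-α)^2 * x^2) := by rw [hu]; ring
    _ ≤ (1-α) * x * (1 + 4*x)^3 * (8 * (1 - α)^2 * x^2) := by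
        apply mul_le_mul_of_nonneg_right _ (le_of_lt hden)
        apply mul_le_mul_of_nonneg_left _ (by nlinarith)
        apply pow_le_pow_left₀ (by nlinarith) (by nlinarith)

lemma g_nonneg : 0 ≤ g α x := by
  refine le_trans ?_ (g_lb hα hx0 hx1)
  obtain ⟨h0, h1⟩ := hα
  have h1x : (0:ℝ) ≤ 1 - x := by linarith
  have h1a : (0:ℝ) ≤ 1 - α := by linarith
  positivity

lemma g_le_125 : g α x ≤ 125 * x := by
  refine le_trans (g_ub hα hx0 hx1) ?_
  obtain ⟨ha0, ha1⟩ := hα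
  have hc0 : (0:ℝ) ≤ (1+4*x)^3 := by positivity
  have hc : (1+4*x)^3 ≤ 125 := by
    calc (1+4*x)^3 ≤ 5^3 := pow_le_pow_left₀ (by linarith) (by linarith) 3
      _ = 125 := by norm_num
  nlinarith [mul_le_mul_of_nonneg_left hc hx0, mul_nonneg hx0 hc0,
    mul_nonneg ha0 (mul_nonneg hx0 hc0)]

end gbounds

lemma g_zero (α : ℝ) : g α 0 = 0 := by simp [g]

lemma g_continuousOn {α : ℝ} (hα : α ∈ Set.Ico (0:ℝ) 1) :
    ContinuousOn (g α) (Set.Icc 0 1) := by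
  intro x hx
  rcases eq_or_ne x 0 with rfl | hx0
  · unfold ContinuousWithinAt
    rw [g_zero]
    apply squeeze_zero' (g := fun y => 125 * y)
    · filter_upwards [self_mem_nhdsWithin] with y hy
      exact g_nonneg hα hy.1 hy.2
    · filter_upwards [self_mem_nhdsWithin] with y hy
      exact g_le_125 hα hy.1 hy.2
    · have h125 : Filter.Tendsto (fun y : ℝ => 125 * y) (nhds 0) (nhds 0) := by
        have hcont : Continuous (fun y : ℝ => 125 * y) := by fun_prop
        have := hcont.tendsto (0:ℝ)
        simpa using this
      exact h125.mono_left nhdsWithin_le_nhds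
  · apply ContinuousAt.continuousWithinAt
    have hev : ∀ᶠ y in nhds x, g α y =
        (1 - Real.sqrt (1 - 4 * (1 - α) * y * (1 - y))) ^ 3 / (8 * (1 - α) ^ 2 * y ^ 2) := by
      filter_upwards [eventually_ne_nhds hx0] with y hy
      simp [g, hy]
    have hE : ContinuousAt (fun y : ℝ =>
        (1 - Real.sqrt (1 - 4 * (1 - α) * y * (1 - y))) ^ 3 / (8 * (1 - α) ^ 2 * y ^ 2)) x := by
      apply ContinuousAt.div
      · fun_prop
      · fun_prop
      · have h1 : (0:ℝ) < 1 - α := by have := hα.2; linarith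
        have hx2 : (0:ℝ) < x^2 := by rw [← sq_abs]; exact pow_pos (abs_pos.2 hx0) 2
        exact ne_of_gt (mul_pos (mul_pos (by norm_num) (pow_pos h1 2)) hx2)
    exact ContinuousAt.congr hE (Filter.EventuallyEq.symm hev)

/-! ### `pbar` -/

lemma pbar_bddAbove {α : ℝ} (hα : α ∈ Set.Ico (0:ℝ) 1) :
    BddAbove (g α '' Set.Icc 0 1) := by
  refine ⟨125, ?_⟩
  rintro y ⟨x, hx, rfl⟩
  calc g α x ≤ 125 * x := g_le_125 hα hx.1 hx.2
    _ ≤ 125 := by nlinarith [hx.2]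

lemma g_le_pbar {α x : ℝ} (hα : α ∈ Set.Ico (0:ℝ) 1) (hx0 : 0 ≤ x) (hx1 : x ≤ 1) :
    g α x ≤ pbar α :=
  le_csSup (pbar_bddAbove hα) ⟨x, ⟨hx0, hx1⟩, rfl⟩

lemma pbar_nonneg {α : ℝ} (hα : α ∈ Set.Ico (0:ℝ) 1) : 0 ≤ pbar α := by
  have := g_le_pbar hα le_rfl zero_le_one
  rw [g_zero] at this
  exact this

/-! ### Basic facts about `f1`, `f2` -/

section fl
variable {β₁ β₂ : ℝ} (hβ₁ : 0 < β₁) (hβ₂ : 0 < β₂) {p : ℝ × ℝ}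
  (hp1 : 0 ≤ p.1) (hp2 : 0 ≤ p.2)
include hβ₁ hβ₂ hp1 hp2

lemma Sig_nonneg : 0 ≤ Sig β₁ β₂ p := by
  have := mul_nonneg hβ₁.le hp1; have := mul_nonneg hβ₂.le hp2
  simp only [Sig]; linarith

lemma f1_eq : f1 β₁ β₂ p = psi (Sig β₁ β₂ p) * (β₁ * p.1) := by
  rcases eq_or_ne (Sig β₁ β₂ p) 0 with h | h
  · have h1 : p.1 = 0 := by
      have := mul_nonneg hβ₁.le hp1; have := mul_nonneg hβ₂.le hp2
      have hz : β₁ * p.1 = 0 := by simp only [Sig] at h; linarith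
      rcases mul_eq_zero.1 hz with h' | h'
      · exact absurd h' (ne_of_gt hβ₁)
      · exact h'
    simp [f1, h, h1]
  · rw [f1, if_neg h, psi, if_neg h]; ring

lemma f2_eq : f2 β₁ β₂ p = psi (Sig β₁ β₂ p) * (β₂ * p.2) := by
  rcases eq_or_ne (Sig β₁ β₂ p) 0 with h | h
  · have h2 : p.2 = 0 := by
      have := mul_nonneg hβ₁.le hp1; have := mul_nonneg hβ₂.le hp2
      have hz : β₂ * p.2 = 0 := by simp only [Sig] at h; linarith
      rcases mul_eq_zero.1 hz with h' | h'
      · exact absurd h' (ne_of_gt hβ₂)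
      · exact h'
    simp [f2, h, h2]
  · rw [f2, if_neg h, psi, if_neg h]; ring

lemma f1_nonneg : 0 ≤ f1 β₁ β₂ p := by
  rw [f1_eq hβ₁ hβ₂ hp1 hp2]
  exact mul_nonneg (psi_pos (Sig_nonneg hβ₁ hβ₂ hp1 hp2)).le (mul_nonneg hβ₁.le hp1)

lemma f2_nonneg : 0 ≤ f2 β₁ β₂ p := by
  rw [f2_eq hβ₁ hβ₂ hp1 hp2]
  exact mul_nonneg (psi_pos (Sig_nonneg hβ₁ hβ₂ hp1 hp2)).le (mul_nonneg hβ₂.le hp2)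

lemma f1_le_lin : f1 β₁ β₂ p ≤ β₁ * p.1 := by
  rw [f1_eq hβ₁ hβ₂ hp1 hp2]
  calc psi (Sig β₁ β₂ p) * (β₁ * p.1) ≤ 1 * (β₁ * p.1) :=
        mul_le_mul_of_nonneg_right (psi_le_one (Sig_nonneg hβ₁ hβ₂ hp1 hp2))
          (mul_nonneg hβ₁.le hp1)
    _ = β₁ * p.1 := one_mul _

lemma f1_lt_one : f1 β₁ β₂ p < 1 := by
  rcases eq_or_ne (Sig β₁ β₂ p) 0 with h | h
  · rw [f1, if_pos h]; norm_num
  · have hS : 0 < Sig β₁ β₂ p := lt_of_le_of_ne (Sig_nonneg hβ₁ hβ₂ hp1 hp2) (Ne.symm h)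
    rw [f1, if_neg h, div_lt_one hS]
    have hb : β₁ * p.1 ≤ Sig β₁ β₂ p := by
      have := mul_nonneg hβ₂.le hp2; simp only [Sig]; linarith
    have hb0 : 0 ≤ β₁ * p.1 := mul_nonneg hβ₁.le hp1
    have he : 0 < Real.exp (-Sig β₁ β₂ p) := Real.exp_pos _
    have he1 : Real.exp (-Sig β₁ β₂ p) ≤ 1 := by
      apply Real.exp_le_one_iff.2; linarith
    calc (1 - Real.exp (-Sig β₁ β₂ p)) * (β₁ * p.1)
        ≤ (1 - Real.exp (-Sig β₁ β₂ p)) * Sig β₁ β₂ p :=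
          mul_le_mul_of_nonneg_left hb (by linarith)
      _ < Sig β₁ β₂ p := by nlinarith [mul_pos he hS]

lemma f2_lt_one : f2 β₁ β₂ p < 1 := by
  rcases eq_or_ne (Sig β₁ β₂ p) 0 with h | h
  · rw [f2, if_pos h]; norm_num
  · have hS : 0 < Sig β₁ β₂ p := lt_of_le_of_ne (Sig_nonneg hβ₁ hβ₂ hp1 hp2) (Ne.symm h)
    rw [f2, if_neg h, div_lt_one hS]
    have hb : β₂ * p.2 ≤ Sig β₁ β₂ p := by
      have := mul_nonneg hβ₁.le hp1; simp only [Sig]; linarith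
    have hb0 : 0 ≤ β₂ * p.2 := mul_nonneg hβ₂.le hp2
    have he : 0 < Real.exp (-Sig β₁ β₂ p) := Real.exp_pos _
    have he1 : Real.exp (-Sig β₁ β₂ p) ≤ 1 := by
      apply Real.exp_le_one_iff.2; linarith
    calc (1 - Real.exp (-Sig β₁ β₂ p)) * (β₂ * p.2)
        ≤ (1 - Real.exp (-Sig β₁ β₂ p)) * Sig β₁ β₂ p :=
          mul_le_mul_of_nonneg_left hb (by linarith)
      _ < Sig β₁ β₂ p := by nlinarith [mul_pos he hS]

end fl

lemma f1_continuousOn {β₁ β₂ : ℝ} (hβ₁ : 0 < β₁) (hβ₂ : 0 < β₂) :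
    ContinuousOn (f1 β₁ β₂) (Set.Ici (0:ℝ) ×ˢ Set.Ici (0:ℝ)) := by
  intro p hp
  have hp1 : (0:ℝ) ≤ p.1 := hp.1
  have hp2 : (0:ℝ) ≤ p.2 := hp.2
  have hSc : Continuous (Sig β₁ β₂) := by unfold Sig; fun_prop
  rcases eq_or_ne (Sig β₁ β₂ p) 0 with hS | hS
  · have hp10 : p.1 = 0 := by
      simp only [Sig] at hS
      nlinarith [mul_nonneg hβ₁.le hp1, mul_nonneg hβ₂.le hp2]
    have hf10 : f1 β₁ β₂ p = 0 := by simp [f1, hS]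
    unfold ContinuousWithinAt
    rw [hf10]
    apply squeeze_zero' (g := fun q : ℝ × ℝ => β₁ * q.1)
    · filter_upwards [self_mem_nhdsWithin] with q hq
      exact f1_nonneg hβ₁ hβ₂ hq.1 hq.2
    · filter_upwards [self_mem_nhdsWithin] with q hq
      exact f1_le_lin hβ₁ hβ₂ hq.1 hq.2
    · have hcont : Continuous (fun q : ℝ × ℝ => β₁ * q.1) := by fun_prop
      have := hcont.tendsto p
      rw [hp10] at this
      simp only [mul_zero] at this
      exact this.mono_left nhdsWithin_le_nhds
  · apply ContinuousAt.continuousWithinAt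
    have hev : ∀ᶠ q in nhds p, f1 β₁ β₂ q =
        (1 - Real.exp (-Sig β₁ β₂ q)) * (β₁ * q.1) / Sig β₁ β₂ q := by
      filter_upwards [hSc.continuousAt.eventually_ne hS] with q hq
      simp [f1, hq]
    have hE : ContinuousAt (fun q : ℝ × ℝ =>
        (1 - Real.exp (-Sig β₁ β₂ q)) * (β₁ * q.1) / Sig β₁ β₂ q) p := by
      apply ContinuousAt.div
      · fun_prop
      · exact hSc.continuousAt
      · exact hS
    exact ContinuousAt.congr hE (Filter.EventuallyEq.symm hev)

lemma f2_continuousOn {β₁ β₂ : ℝ} (hβ₁ : 0 < β₁) (hβ₂ : 0 < β₂) :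
    ContinuousOn (f2 β₁ β₂) (Set.Ici (0:ℝ) ×ˢ Set.Ici (0:ℝ)) := by
  intro p hp
  have hp1 : (0:ℝ) ≤ p.1 := hp.1
  have hp2 : (0:ℝ) ≤ p.2 := hp.2
  have hSc : Continuous (Sig β₁ β₂) := by unfold Sig; fun_prop
  rcases eq_or_ne (Sig β₁ β₂ p) 0 with hS | hS
  · have hp20 : p.2 = 0 := by
      simp only [Sig] at hS
      nlinarith [mul_nonneg hβ₁.le hp1, mul_nonneg hβ₂.le hp2]
    have hf20 : f2 β₁ β₂ p = 0 := by simp [f2, hS]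
    unfold ContinuousWithinAt
    rw [hf20]
    apply squeeze_zero' (g := fun q : ℝ × ℝ => β₂ * q.2)
    · filter_upwards [self_mem_nhdsWithin] with q hq
      exact f2_nonneg hβ₁ hβ₂ hq.1 hq.2
    · filter_upwards [self_mem_nhdsWithin] with q hq
      rw [f2_eq hβ₁ hβ₂ hq.1 hq.2]
      calc psi (Sig β₁ β₂ q) * (β₂ * q.2) ≤ 1 * (β₂ * q.2) :=
            mul_le_mul_of_nonneg_right (psi_le_one (Sig_nonneg hβ₁ hβ₂ hq.1 hq.2))
              (mul_nonneg hβ₂.le hq.2)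
        _ = β₂ * q.2 := one_mul _
    · have hcont : Continuous (fun q : ℝ × ℝ => β₂ * q.2) := by fun_prop
      have := hcont.tendsto p
      rw [hp20] at this
      simp only [mul_zero] at this
      exact this.mono_left nhdsWithin_le_nhds
  · apply ContinuousAt.continuousWithinAt
    have hev : ∀ᶠ q in nhds p, f2 β₁ β₂ q =
        (1 - Real.exp (-Sig β₁ β₂ q)) * (β₂ * q.2) / Sig β₁ β₂ q := by
      filter_upwards [hSc.continuousAt.eventually_ne hS] with q hq
      simp [f2, hq]
    have hE : ContinuousAt (fun q : ℝ × ℝ =>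
        (1 - Real.exp (-Sig β₁ β₂ q)) * (β₂ * q.2) / Sig β₁ β₂ q) p := by
      apply ContinuousAt.div
      · fun_prop
      · exact hSc.continuousAt
      · exact hS
    exact ContinuousAt.congr hE (Filter.EventuallyEq.symm hev)

/-! ### `psiext` -/

noncomputable def psiext (z : ℝ) : ℝ := psi (z ⊔ 0)

lemma psiext_eq {z : ℝ} (hz : 0 ≤ z) : psiext z = psi z := by
  simp [psiext, sup_eq_left.2 hz]

lemma psiext_continuous : Continuous psiext := by
  rw [continuous_iff_continuousAt]
  intro z
  rcases lt_trichotomy z 0 with hz | hz | hz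
  · have hev : ∀ᶠ w in nhds z, psiext w = 1 := by
      filter_upwards [eventually_lt_nhds hz] with w hw
      simp [psiext, sup_eq_right.2 hw.le, psi]
    exact ContinuousAt.congr continuousAt_const (Filter.EventuallyEq.symm hev)
  · subst hz
    have key : ∀ w : ℝ, |psiext w - 1| ≤ |w| := by
      intro w
      have h0 : (0:ℝ) ≤ w ⊔ 0 := le_sup_right
      have h1 : psi (w ⊔ 0) ≤ 1 := psi_le_one h0
      have h2 : Real.exp (-(w ⊔ 0)) ≤ psi (w ⊔ 0) := exp_neg_le_psi h0
      have h3 : 1 - (w ⊔ 0) ≤ Real.exp (-(w ⊔ 0)) := by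
        have := Real.add_one_le_exp (-(w ⊔ 0)); linarith
      rw [abs_le]
      constructor
      · simp only [psiext]
        have : w ⊔ 0 ≤ |w| := by
          rcases le_or_gt w 0 with h | h
          · simp [sup_eq_right.2 h, abs_nonneg]
          · rw [sup_eq_left.2 h.le, abs_of_pos h]
        linarith
      · simp only [psiext]
        have : (0:ℝ) ≤ |w| := abs_nonneg _
        linarith
    unfold ContinuousAt
    have hpsi0 : psiext 0 = 1 := by simp [psiext, psi]
    rw [hpsi0]
    rw [tendsto_iff_dist_tendsto_zero]
    have habs : Filter.Tendsto (fun w : ℝ => |w|) (nhds 0) (nhds 0) := by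
      have := continuous_abs.tendsto (0:ℝ)
      simpa using this
    refine squeeze_zero (fun w => dist_nonneg) (fun w => ?_) habs
    rw [Real.dist_eq]
    exact key w
  · have hev : ∀ᶠ w in nhds z, psiext w = (1 - Real.exp (-w)) / w := by
      filter_upwards [eventually_gt_nhds hz] with w hw
      simp [psiext, sup_eq_left.2 hw.le, psi, ne_of_gt hw]
    have hE : ContinuousAt (fun w : ℝ => (1 - Real.exp (-w)) / w) z := by
      apply ContinuousAt.div
      · fun_prop
      · fun_prop
      · exact ne_of_gt hz
    exact ContinuousAt.congr hE (Filter.EventuallyEq.symm hev)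

/-! ### The `hmap` dynamics -/

section dyn

variable {α₁ α₂ β₁ β₂ : ℝ}
  (hα₁ : α₁ ∈ Set.Ico (0 : ℝ) 1) (hα₂ : α₂ ∈ Set.Ico (0 : ℝ) 1)
  (hβ₁ : 0 < β₁) (hβ₂ : 0 < β₂)

include hα₁ hα₂ hβ₁ hβ₂

lemma h_basic {p : ℝ × ℝ} (hp1 : 0 ≤ p.1) (hp2 : 0 ≤ p.2) :
    0 ≤ (hmap α₁ α₂ β₁ β₂ p).1 ∧ (hmap α₁ α₂ β₁ β₂ p).1 ≤ pbar α₁ ∧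
    0 ≤ (hmap α₁ α₂ β₁ β₂ p).2 ∧ (hmap α₁ α₂ β₁ β₂ p).2 ≤ pbar α₂ := by
  have h10 := f1_nonneg hβ₁ hβ₂ hp1 hp2
  have h11 := (f1_lt_one hβ₁ hβ₂ hp1 hp2).le
  have h20 := f2_nonneg hβ₁ hβ₂ hp1 hp2
  have h21 := (f2_lt_one hβ₁ hβ₂ hp1 hp2).le
  exact ⟨g_nonneg hα₁ h10 h11, g_le_pbar hα₁ h10 h11,
    g_nonneg hα₂ h20 h21, g_le_pbar hα₂ h20 h21⟩

lemma h1_pos {p : ℝ × ℝ} (hp1 : 0 < p.1) (hp2 : 0 ≤ p.2) :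
    0 < (hmap α₁ α₂ β₁ β₂ p).1 := by
  have h10 : 0 < f1 β₁ β₂ p := by
    rw [f1_eq hβ₁ hβ₂ hp1.le hp2]
    exact mul_pos (psi_pos (Sig_nonneg hβ₁ hβ₂ hp1.le hp2)) (mul_pos hβ₁ hp1)
  have h11 := f1_lt_one hβ₁ hβ₂ hp1.le hp2
  refine lt_of_lt_of_le ?_ (g_lb hα₁ h10.le h11.le)
  have hα := hα₁.2
  have : (0:ℝ) < 1 - α₁ := by linarith
  have h1f : (0:ℝ) < 1 - f1 β₁ β₂ p := by linarith
  positivity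

/-- One-step lower bound for the first component, when `p.1 ≤ η`. -/
lemma step_lb {p : ℝ × ℝ} {η : ℝ} (hp1 : 0 < p.1) (hp2 : 0 ≤ p.2)
    (hη : p.1 ≤ η) (hη1 : β₁ * η ≤ 1) :
    (1 - α₁) * β₁ * (1 - β₁*η)^3 * (psi (β₂ * p.2) - β₁*η) * p.1
      ≤ (hmap α₁ α₂ β₁ β₂ p).1 := by
  have h10 := f1_nonneg hβ₁ hβ₂ hp1.le hp2
  have h11 := f1_lt_one hβ₁ hβ₂ hp1.le hp2
  have hglb := g_lb hα₁ h10 h11.le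
  have hα := hα₁.2
  have hα0 := hα₁.1
  have h1a : (0:ℝ) < 1 - α₁ := by linarith
  -- f1 ≤ β₁ η
  have hf1le : f1 β₁ β₂ p ≤ β₁ * η := le_trans (f1_le_lin hβ₁ hβ₂ hp1.le hp2)
    (mul_le_mul_of_nonneg_left hη hβ₁.le)
  have hcube : (1 - β₁*η)^3 ≤ (1 - f1 β₁ β₂ p)^3 :=
    pow_le_pow_left₀ (by linarith) (by linarith) 3
  have hcube0 : (0:ℝ) ≤ (1 - β₁*η)^3 := by
    apply pow_nonneg; linarith
  -- psi (Sig p) ≥ psi (β₂ p.2) - β₁ η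
  have hS2 : (0:ℝ) ≤ β₂ * p.2 := mul_nonneg hβ₂.le hp2
  have hSle : β₂ * p.2 ≤ Sig β₁ β₂ p := by
    have := mul_nonneg hβ₁.le hp1.le; simp only [Sig]; linarith
  have hpsi_lb : psi (β₂ * p.2) - β₁*η ≤ psi (Sig β₁ β₂ p) := by
    have := psi_lip hS2 hSle
    have hSig : Sig β₁ β₂ p - β₂ * p.2 = β₁ * p.1 := by simp only [Sig]; ring
    have : psi (β₂ * p.2) - psi (Sig β₁ β₂ p) ≤ β₁ * p.1 := by linarith [this, hSig.ge]
    have hb : β₁ * p.1 ≤ β₁ * η := mul_le_mul_of_nonneg_left hη hβ₁.le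
    linarith
  have hpsiS : 0 < psi (Sig β₁ β₂ p) := psi_pos (Sig_nonneg hβ₁ hβ₂ hp1.le hp2)
  rcases le_or_gt (psi (β₂ * p.2) - β₁*η) 0 with hc | hc
  · -- RHS of goal is ≥ 0, LHS ≤ 0
    have hL : (1 - α₁) * β₁ * (1 - β₁*η)^3 * (psi (β₂ * p.2) - β₁*η) * p.1 ≤ 0 := by
      have h1 : 0 ≤ (1 - α₁) * β₁ * (1 - β₁*η)^3 := by positivity
      have := mul_nonpos_of_nonneg_of_nonpos h1 hc
      exact mul_nonpos_of_nonpos_of_nonneg this hp1.le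
    have hR : 0 ≤ (hmap α₁ α₂ β₁ β₂ p).1 :=
      (h_basic hα₁ hα₂ hβ₁ hβ₂ hp1.le hp2).1
    linarith
  · refine le_trans ?_ hglb
    rw [f1_eq hβ₁ hβ₂ hp1.le hp2]
    -- goal: (1-α₁) β₁ (1-β₁η)³ (ψ(β₂p₂) - β₁η) p₁ ≤ (1-α₁) (ψ(Σ) β₁ p₁) (1 - f₁)³
    have key : (1 - β₁*η)^3 * (psi (β₂ * p.2) - β₁*η)
        ≤ (1 - f1 β₁ β₂ p)^3 * psi (Sig β₁ β₂ p) := by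
      apply mul_le_mul hcube hpsi_lb hc.le
      apply pow_nonneg; linarith
    calc (1 - α₁) * β₁ * (1 - β₁*η)^3 * (psi (β₂ * p.2) - β₁*η) * p.1
        = ((1 - β₁*η)^3 * (psi (β₂ * p.2) - β₁*η)) * ((1 - α₁) * β₁ * p.1) := by ring
      _ ≤ ((1 - f1 β₁ β₂ p)^3 * psi (Sig β₁ β₂ p)) * ((1 - α₁) * β₁ * p.1) := by
          apply mul_le_mul_of_nonneg_right key
          have := mul_nonneg hβ₁.le hp1.le
          positivity
      _ = (1 - α₁) * (psi (Sig β₁ β₂ p) * (β₁ * p.1)) * (1 - psi (Sig β₁ β₂ p) * (β₁ * p.1))^3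
          := by rw [← f1_eq hβ₁ hβ₂ hp1.le hp2]; rw [f1_eq hβ₁ hβ₂ hp1.le hp2]; ring

/-- `hmap` fixes the axis `p₁ = 0` and acts there as `tmap`. -/
lemma hmap_axis (x : ℝ) : hmap α₁ α₂ β₁ β₂ (0, x) = (0, tmap α₂ β₂ x) := by
  have hf1 : f1 β₁ β₂ ((0:ℝ), x) = 0 := by
    rcases eq_or_ne (Sig β₁ β₂ ((0:ℝ), x)) 0 with h | h
    · simp [f1, h]
    · simp [f1, h]
  have hf2 : f2 β₁ β₂ ((0:ℝ), x) = 1 - Real.exp (-(β₂ * x)) := by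
    rcases eq_or_ne (Sig β₁ β₂ ((0:ℝ), x)) 0 with h | h
    · have hx : β₂ * x = 0 := by simp only [Sig] at h; linarith
      rw [f2, if_pos h, hx]
      simp
    · have hx : Sig β₁ β₂ ((0:ℝ), x) = β₂ * x := by simp [Sig]
      rw [f2, if_neg h, hx]
      have hx0 : β₂ * x ≠ 0 := by rw [← hx]; exact h
      field_simp
      exact mul_div_cancel_left₀ _ (right_ne_zero_of_mul hx0)
  simp only [hmap, hf1, hf2, g_zero, tmap]

lemma hmap_axis_iter (x : ℝ) (k : ℕ) :
    (hmap α₁ α₂ β₁ β₂)^[k] (0, x) = (0, (tmap α₂ β₂)^[k] x) := by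
  induction k generalizing x with
  | zero => simp
  | succ n ih =>
      rw [Function.iterate_succ_apply, Function.iterate_succ_apply,
        hmap_axis hα₁ hα₂ hβ₁ hβ₂]
      exact ih _

lemma tmap_mem {x : ℝ} (hx : 0 ≤ x) :
    tmap α₂ β₂ x ∈ Set.Icc 0 (pbar α₂) := by
  have h1 : (0:ℝ) ≤ 1 - Real.exp (-(β₂ * x)) := by
    have : Real.exp (-(β₂ * x)) ≤ 1 := by
      apply Real.exp_le_one_iff.2
      simp only [neg_nonpos]
      exact mul_nonneg hβ₂.le hx
    linarith
  have h2 : 1 - Real.exp (-(β₂ * x)) ≤ 1 := by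
    have := Real.exp_pos (-(β₂ * x)); linarith
  exact ⟨g_nonneg hα₂ h1 h2, g_le_pbar hα₂ h1 h2⟩

lemma tmap_iter_mem {x : ℝ} (hx : x ∈ Set.Icc 0 (pbar α₂)) (k : ℕ) :
    (tmap α₂ β₂)^[k] x ∈ Set.Icc 0 (pbar α₂) := by
  induction k with
  | zero => simpa
  | succ n ih =>
      rw [Function.iterate_succ_apply']
      exact tmap_mem hα₁ hα₂ hβ₁ hβ₂ ih.1

end dyn

section dyn2

variable {α₁ α₂ β₁ β₂ : ℝ}
  (hα₁ : α₁ ∈ Set.Ico (0 : ℝ) 1) (hα₂ : α₂ ∈ Set.Ico (0 : ℝ) 1)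
  (hβ₁ : 0 < β₁) (hβ₂ : 0 < β₂)
include hα₁ hα₂ hβ₁ hβ₂

lemma prod_facts {x : ℝ} (hx : x ∈ Set.Icc 0 (pbar α₂)) (n : ℕ) :
    0 ≤ (∏ k ∈ Finset.range n, psi (β₂ * (tmap α₂ β₂)^[k] x)) ∧
    (∏ k ∈ Finset.range n, psi (β₂ * (tmap α₂ β₂)^[k] x)) ≤ 1 := by
  constructor
  · apply Finset.prod_nonneg
    intro k _
    exact (psi_pos (mul_nonneg hβ₂.le (tmap_iter_mem hα₁ hα₂ hβ₁ hβ₂ hx k).1)).le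
  · apply Finset.prod_le_one
    · intro k _
      exact (psi_pos (mul_nonneg hβ₂.le (tmap_iter_mem hα₁ hα₂ hβ₁ hβ₂ hx k).1)).le
    · intro k _
      exact psi_le_one (mul_nonneg hβ₂.le (tmap_iter_mem hα₁ hα₂ hβ₁ hβ₂ hx k).1)

lemma sigma_le_liminf {x : ℝ} (hx : x ∈ Set.Icc 0 (pbar α₂)) :
    sigma α₂ β₂ ≤ Filter.liminf
      (fun n : ℕ => (∏ k ∈ Finset.range n, psi (β₂ * (tmap α₂ β₂)^[k] x)) ^ (1 / (n : ℝ)))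
      Filter.atTop := by
  apply csInf_le
  · refine ⟨0, ?_⟩
    rintro v ⟨y, hy, rfl⟩
    have hb : Filter.IsCoboundedUnder (· ≥ ·) Filter.atTop
        (fun n : ℕ => (∏ k ∈ Finset.range n, psi (β₂ * (tmap α₂ β₂)^[k] y)) ^ (1 / (n : ℝ))) := by
      apply Filter.IsBoundedUnder.isCoboundedUnder_ge
      refine ⟨1, ?_⟩
      apply Filter.eventually_map.2
      filter_upwards with n
      exact Real.rpow_le_one (prod_facts hα₁ hα₂ hβ₁ hβ₂ hy n).1
        (prod_facts hα₁ hα₂ hβ₁ hβ₂ hy n).2 (by positivity)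
    apply Filter.le_liminf_of_le hb
    filter_upwards with n
    exact Real.rpow_nonneg (prod_facts hα₁ hα₂ hβ₁ hβ₂ hy n).1 _
  · exact Set.mem_image_of_mem _ hx

lemma exists_good_k {x s' : ℝ} (hx : x ∈ Set.Icc 0 (pbar α₂)) (hs'0 : 0 ≤ s')
    (hs' : s' < sigma α₂ β₂) :
    ∃ k : ℕ, 1 ≤ k ∧ s'^k < ∏ j ∈ Finset.range k, psi (β₂ * (tmap α₂ β₂)^[j] x) := by
  have hlim := lt_of_lt_of_le hs' (sigma_le_liminf hα₁ hα₂ hβ₁ hβ₂ hx)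
  have hbelow : Filter.IsBoundedUnder (· ≥ ·) Filter.atTop
      (fun n : ℕ => (∏ k ∈ Finset.range n, psi (β₂ * (tmap α₂ β₂)^[k] x)) ^ (1 / (n : ℝ))) := by
    refine ⟨0, ?_⟩
    apply Filter.eventually_map.2
    filter_upwards with n
    exact Real.rpow_nonneg (prod_facts hα₁ hα₂ hβ₁ hβ₂ hx n).1 _
  have hev := Filter.eventually_lt_of_lt_liminf hlim hbelow
  obtain ⟨n₀, hn₀⟩ := Filter.eventually_atTop.1 hev
  refine ⟨max n₀ 1, le_max_right _ _, ?_⟩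
  set k := max n₀ 1 with hk
  have hk1 : 1 ≤ k := le_max_right _ _
  have hku := hn₀ k (le_max_left _ _)
  set P := ∏ j ∈ Finset.range k, psi (β₂ * (tmap α₂ β₂)^[j] x) with hP
  have hP0 : 0 ≤ P := (prod_facts hα₁ hα₂ hβ₁ hβ₂ hx k).1
  have hkne : (k : ℝ) ≠ 0 := by positivity
  have hPeq : (P ^ (1 / (k:ℝ))) ^ (k:ℕ) = P := by
    rw [← Real.rpow_natCast (P ^ (1 / (k:ℝ))) k, ← Real.rpow_mul hP0]
    rw [one_div_mul_cancel hkne, Real.rpow_one]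
  calc s'^k < (P ^ (1 / (k:ℝ)))^k := by
        apply pow_lt_pow_left₀ hku hs'0
        omega
    _ = P := hPeq

lemma hmap_continuousOn :
    ContinuousOn (hmap α₁ α₂ β₁ β₂) (Set.Ici (0:ℝ) ×ˢ Set.Ici (0:ℝ)) := by
  apply ContinuousOn.prodMk
  · apply ContinuousOn.comp (g_continuousOn hα₁) (f1_continuousOn hβ₁ hβ₂)
    intro p hp
    exact ⟨f1_nonneg hβ₁ hβ₂ hp.1 hp.2, (f1_lt_one hβ₁ hβ₂ hp.1 hp.2).le⟩
  · apply ContinuousOn.comp (g_continuousOn hα₂) (f2_continuousOn hβ₁ hβ₂)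
    intro p hp
    exact ⟨f2_nonneg hβ₁ hβ₂ hp.1 hp.2, (f2_lt_one hβ₁ hβ₂ hp.1 hp.2).le⟩

lemma hmap_mapsTo {A B : ℝ} (hA : max (pbar α₁) 1 ≤ A) (hB : max (pbar α₂) 1 ≤ B) :
    Set.MapsTo (hmap α₁ α₂ β₁ β₂) (Set.Icc 0 A ×ˢ Set.Icc 0 B) (Set.Icc 0 A ×ˢ Set.Icc 0 B) := by
  intro p hp
  obtain ⟨h1, h2, h3, h4⟩ := h_basic hα₁ hα₂ hβ₁ hβ₂ hp.1.1 hp.2.1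
  refine ⟨⟨h1, ?_⟩, ⟨h3, ?_⟩⟩
  · exact le_trans h2 (le_trans (le_max_left _ _) hA)
  · exact le_trans h4 (le_trans (le_max_left _ _) hB)

lemma hmap_iter_contOn {A B : ℝ} (hA : max (pbar α₁) 1 ≤ A) (hB : max (pbar α₂) 1 ≤ B)
    (hA0 : 0 ≤ A) (hB0 : 0 ≤ B) (j : ℕ) :
    ContinuousOn ((hmap α₁ α₂ β₁ β₂)^[j]) (Set.Icc 0 A ×ˢ Set.Icc 0 B) := by
  induction j with
  | zero => simpa using continuousOn_id
  | succ n ih =>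
      rw [Function.iterate_succ']
      apply ContinuousOn.comp ?_ ih ((hmap_mapsTo hα₁ hα₂ hβ₁ hβ₂ hA hB).iterate n)
      apply (hmap_continuousOn hα₁ hα₂ hβ₁ hβ₂).mono
      intro p hp
      exact ⟨hp.1.1, hp.2.1⟩

lemma tracking (kb : ℕ) {δ₂ : ℝ} (hδ₂ : 0 < δ₂) :
    ∃ η : ℝ, 0 < η ∧ η ≤ 1 ∧ ∀ q : ℝ × ℝ, 0 ≤ q.1 → q.1 ≤ η →
      q.2 ∈ Set.Icc 0 (pbar α₂) → ∀ j, j ≤ kb →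
      dist ((hmap α₁ α₂ β₁ β₂)^[j] q) ((hmap α₁ α₂ β₁ β₂)^[j] (0, q.2)) ≤ δ₂ := by
  set A := max (pbar α₁) 1 with hA
  set B := max (pbar α₂) 1 with hB
  set D := Set.Icc (0:ℝ) A ×ˢ Set.Icc (0:ℝ) B with hD
  have hA0 : (0:ℝ) ≤ A := le_trans zero_le_one (le_max_right _ _)
  have hB0 : (0:ℝ) ≤ B := le_trans zero_le_one (le_max_right _ _)
  have hDcomp : IsCompact D := IsCompact.prod isCompact_Icc isCompact_Icc
  have key : ∀ n : ℕ, ∃ η : ℝ, 0 < η ∧ ∀ j, j ≤ n → ∀ p ∈ D, ∀ q ∈ D,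
      dist p q < η → dist ((hmap α₁ α₂ β₁ β₂)^[j] p) ((hmap α₁ α₂ β₁ β₂)^[j] q) < δ₂ := by
    intro n
    induction n with
    | zero =>
        refine ⟨δ₂, hδ₂, ?_⟩
        intro j hj p _ q _ hpq
        interval_cases j
        simpa using hpq
    | succ m ih =>
        obtain ⟨η₀, hη₀, hprop⟩ := ih
        have huc : UniformContinuousOn ((hmap α₁ α₂ β₁ β₂)^[m+1]) D :=
          hDcomp.uniformContinuousOn_of_continuous
            (hmap_iter_contOn hα₁ hα₂ hβ₁ hβ₂ le_rfl le_rfl hA0 hB0 (m+1))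
        rw [Metric.uniformContinuousOn_iff] at huc
        obtain ⟨η₁, hη₁, hprop₁⟩ := huc δ₂ hδ₂
        refine ⟨min η₀ η₁, lt_min hη₀ hη₁, ?_⟩
        intro j hj p hp q hq hpq
        rcases Nat.lt_or_ge j (m+1) with h | h
        · exact hprop j (by omega) p hp q hq (lt_of_lt_of_le hpq (min_le_left _ _))
        · have : j = m + 1 := by omega
          subst this
          exact hprop₁ p hp q hq (lt_of_lt_of_le hpq (min_le_right _ _))
  obtain ⟨η₀, hη₀, hprop⟩ := key kb
  refine ⟨min (η₀/2) 1, lt_min (by linarith) one_pos, min_le_right _ _, ?_⟩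
  intro q hq0 hqle hq2 j hj
  have hqD : q ∈ D := by
    constructor
    · constructor
      · exact hq0
      · have : q.1 ≤ 1 := le_trans hqle (min_le_right _ _)
        exact le_trans this (le_max_right _ _)
    · exact ⟨hq2.1, le_trans hq2.2 (le_max_left _ _)⟩
  have hq'D : ((0:ℝ), q.2) ∈ D := by
    refine ⟨⟨le_rfl, hA0⟩, ⟨hq2.1, le_trans hq2.2 (le_max_left _ _)⟩⟩
  have hdist : dist q ((0:ℝ), q.2) < η₀ := by
    rw [Prod.dist_eq]
    simp only [dist_self]
    have h1 : dist q.1 (0:ℝ) = q.1 := by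
      rw [Real.dist_eq, sub_zero, abs_of_nonneg hq0]
    rw [h1]
    have h2 : q.1 ≤ η₀/2 := le_trans hqle (min_le_left _ _)
    have h3 : max q.1 0 ≤ η₀ / 2 := max_le h2 (by linarith)
    linarith
  exact (hprop j hj q hqD ((0:ℝ), q.2) hq'D hdist).le

lemma cover_lemma {s s' : ℝ} (hs : 0 < s) (hss' : s < s') (hs'σ : s' < sigma α₂ β₂) :
    ∃ kb : ℕ, 1 ≤ kb ∧ ∀ x ∈ Set.Icc 0 (pbar α₂), ∃ k : ℕ, 1 ≤ k ∧ k ≤ kb ∧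
      s^k < ∏ j ∈ Finset.range k, psi (β₂ * (tmap α₂ β₂)^[j] x) := by
  set B₂ := pbar α₂ with hB₂
  set proj : ℝ → ℝ := fun y => (y ⊓ B₂) ⊔ 0 with hproj
  have hprojmem : ∀ y, proj y ∈ Set.Icc 0 B₂ := by
    intro y
    constructor
    · exact le_sup_right
    · apply sup_le _ (pbar_nonneg hα₂)
      exact inf_le_right
  have hprojeq : ∀ y ∈ Set.Icc (0:ℝ) B₂, proj y = y := by
    intro y hy
    simp only [hproj]
    rw [inf_eq_left.2 hy.2, sup_eq_left.2 hy.1]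
  have hprojcont : Continuous proj := by fun_prop
  set G : ℕ → ℝ → ℝ := fun i y => ∏ j ∈ Finset.range (i+1),
    psiext (β₂ * ((hmap α₁ α₂ β₁ β₂)^[j] (0, proj y)).2) with hG
  have hGcont : ∀ i, Continuous (G i) := by
    intro i
    apply continuous_finset_prod
    intro j _
    apply psiext_continuous.comp
    apply Continuous.mul continuous_const
    apply Continuous.snd
    apply ContinuousOn.comp_continuous
      (hmap_iter_contOn hα₁ hα₂ hβ₁ hβ₂ le_rfl le_rfl
        (le_trans zero_le_one (le_max_right _ _)) (le_trans zero_le_one (le_max_right _ _)) j)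
      (continuous_const.prodMk hprojcont)
    intro y
    constructor
    · exact ⟨le_rfl, le_trans zero_le_one (le_max_right _ _)⟩
    · exact ⟨(hprojmem y).1, le_trans (hprojmem y).2 (le_max_left _ _)⟩
  have hGeq : ∀ i, ∀ y ∈ Set.Icc (0:ℝ) B₂, G i y =
      ∏ j ∈ Finset.range (i+1), psi (β₂ * (tmap α₂ β₂)^[j] y) := by
    intro i y hy
    apply Finset.prod_congr rfl
    intro j _
    rw [hprojeq y hy, hmap_axis_iter hα₁ hα₂ hβ₁ hβ₂ y j]
    exact psiext_eq (mul_nonneg hβ₂.le (tmap_iter_mem hα₁ hα₂ hβ₁ hβ₂ hy j).1)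
  set U : ℕ → Set ℝ := fun i => (G i) ⁻¹' (Set.Ioi (s^(i+1))) with hU
  have hUopen : ∀ i, IsOpen (U i) := fun i => (hGcont i).isOpen_preimage _ isOpen_Ioi
  have hcover : Set.Icc (0:ℝ) B₂ ⊆ ⋃ i, U i := by
    intro x hx
    obtain ⟨k, hk1, hkgood⟩ := exists_good_k hα₁ hα₂ hβ₁ hβ₂ hx (by linarith) hs'σ
    apply Set.mem_iUnion.2
    refine ⟨k - 1, ?_⟩
    have hkk : k - 1 + 1 = k := by omega
    simp only [hU, Set.mem_preimage, Set.mem_Ioi, hkk]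
    rw [hGeq (k-1) x hx, hkk]
    calc s^k < s'^k := pow_lt_pow_left₀ hss' hs.le (by omega)
      _ < _ := hkgood
  obtain ⟨t, ht⟩ := isCompact_Icc.elim_finite_subcover U hUopen hcover
  refine ⟨t.sup id + 1, by omega, ?_⟩
  intro x hx
  obtain ⟨i, hit, hxU⟩ := Set.mem_iUnion₂.1 (ht hx)
  refine ⟨i + 1, by omega, ?_, ?_⟩
  · have : i ≤ t.sup id := Finset.le_sup (f := id) hit
    omega
  · have hthis := hxU
    simp only [hU, Set.mem_preimage, Set.mem_Ioi] at hthis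
    rw [hGeq i x hx] at hthis
    exact hthis

end dyn2

section window

variable {α₁ α₂ β₁ β₂ : ℝ}
  (hα₁ : α₁ ∈ Set.Ico (0 : ℝ) 1) (hα₂ : α₂ ∈ Set.Ico (0 : ℝ) 1)
  (hβ₁ : 0 < β₁) (hβ₂ : 0 < β₂)
include hα₁ hα₂ hβ₁ hβ₂

set_option maxHeartbeats 2000000 in
lemma window (hσ : 1 < (1 - α₁) * β₁ * sigma α₂ β₂) :
    ∃ ρ : ℝ, 1 < ρ ∧ ∃ kb : ℕ, 1 ≤ kb ∧ ∃ η : ℝ, 0 < η ∧ η ≤ 1 ∧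
      ∀ q : ℝ × ℝ, 0 < q.1 → q.2 ∈ Set.Icc 0 (pbar α₂) →
        (∀ j, j ≤ kb → ((hmap α₁ α₂ β₁ β₂)^[j] q).1 ≤ η) →
        ∃ k, 1 ≤ k ∧ k ≤ kb ∧ ρ * q.1 ≤ ((hmap α₁ α₂ β₁ β₂)^[k] q).1 := by
  set φ := (1 - α₁) * β₁ with hφdef
  have hφ : 0 < φ := mul_pos (by have := hα₁.2; linarith) hβ₁
  have hσ1 : 1/φ < sigma α₂ β₂ := by
    rw [div_lt_iff₀ hφ]
    calc (1:ℝ) < φ * sigma α₂ β₂ := hσ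
      _ = sigma α₂ β₂ * φ := mul_comm _ _
  set s := (1/φ + sigma α₂ β₂)/2 with hs_def
  set s' := (s + sigma α₂ β₂)/2 with hs'_def
  have h1φ : 0 < 1/φ := by positivity
  have hs0 : 0 < s := by simp only [hs_def]; linarith
  have hsσ : s < sigma α₂ β₂ := by simp only [hs_def]; linarith
  have hss' : s < s' := by simp only [hs'_def]; linarith
  have hs'σ : s' < sigma α₂ β₂ := by simp only [hs'_def]; linarith
  have hφs : 1 < φ * s := by
    have h1 : φ * (1/φ) = 1 := by field_simp
    have : φ * s = (φ * (1/φ) + φ * sigma α₂ β₂)/2 := by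
      simp only [hs_def]; ring
    rw [this, h1]; linarith
  set ε := (φ*s - 1)/(8*(φ*s)) with hε_def
  have hφs0 : 0 < φ * s := by linarith
  have hε0 : 0 < ε := by
    apply div_pos (by linarith) (by linarith)
  have hεhalf : ε ≤ 1/2 := by
    rw [hε_def, div_le_iff₀ (by linarith)]
    nlinarith
  set ρ := φ * s * (1-ε)^4 with hρ_def
  have hρ : 1 < ρ := by
    have h4 : 1 - 4*ε ≤ (1-ε)^4 := by nlinarith [mul_nonneg (sq_nonneg ε) (sq_nonneg (ε-2)), sq_nonneg ε]
    have h5 : φ * s * (1 - 4*ε) = φ*s - (φ*s - 1)/2 := by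
      rw [hε_def]; field_simp; ring
    have h6 : 1 < φ * s * (1 - 4*ε) := by rw [h5]; linarith
    calc (1:ℝ) < φ * s * (1 - 4*ε) := h6
      _ ≤ φ * s * (1-ε)^4 := by
          apply mul_le_mul_of_nonneg_left h4 (by linarith)
  set ψm := Real.exp (-(β₂ * pbar α₂)) with hψm_def
  have hψm : 0 < ψm := Real.exp_pos _
  have hψj : ∀ x ∈ Set.Icc (0:ℝ) (pbar α₂), ψm ≤ psi (β₂ * x) := by
    intro x hx
    refine le_trans ?_ (exp_neg_le_psi (mul_nonneg hβ₂.le hx.1))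
    apply Real.exp_le_exp.2
    simp only [neg_le_neg_iff]
    exact mul_le_mul_of_nonneg_left hx.2 hβ₂.le
  obtain ⟨kb, hkb1, hcov⟩ := cover_lemma hα₁ hα₂ hβ₁ hβ₂ hs0 hss' hs'σ
  have hδ₂pos : 0 < ε * ψm / (2*β₂) := div_pos (mul_pos hε0 hψm) (by linarith)
  obtain ⟨η₁, hη₁0, hη₁1, htrack⟩ := tracking hα₁ hα₂ hβ₁ hβ₂ kb hδ₂pos
  set δ₂ := ε * ψm / (2*β₂) with hδ₂_def
  set η := min η₁ (min (ε/β₁) (ε*ψm/(2*β₁))) with hη_def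
  have hη0 : 0 < η := by
    apply lt_min hη₁0
    exact lt_min (div_pos hε0 hβ₁) (div_pos (mul_pos hε0 hψm) (by linarith))
  have hη1 : η ≤ 1 := le_trans (min_le_left _ _) hη₁1
  have hβη : β₁ * η ≤ ε := by
    have : η ≤ ε/β₁ := le_trans (min_le_right _ _) (min_le_left _ _)
    rw [div_eq_mul_inv] at this
    calc β₁ * η ≤ β₁ * (ε * β₁⁻¹) := mul_le_mul_of_nonneg_left this hβ₁.le
      _ = ε := by field_simp
  have hβη2 : β₁ * η ≤ ε * ψm / 2 := by
    have h7 : η ≤ ε*ψm/(2*β₁) := le_trans (min_le_right _ _) (min_le_right _ _)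
    calc β₁ * η ≤ β₁ * (ε*ψm/(2*β₁)) := mul_le_mul_of_nonneg_left h7 hβ₁.le
      _ = ε * ψm / 2 := by field_simp
  have hβη1 : β₁ * η ≤ 1 := by linarith
  refine ⟨ρ, hρ, kb, hkb1, η, hη0, hη1, ?_⟩
  intro q hq1 hq2 hbound
  obtain ⟨k, hk1, hkkb, hprod⟩ := hcov q.2 hq2
  -- basic iterate facts
  have hiter : ∀ j : ℕ, 0 < ((hmap α₁ α₂ β₁ β₂)^[j] q).1 ∧
      ((hmap α₁ α₂ β₁ β₂)^[j] q).2 ∈ Set.Icc 0 (pbar α₂) := by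
    intro j
    induction j with
    | zero => exact ⟨hq1, hq2⟩
    | succ m ihm =>
        rw [Function.iterate_succ_apply']
        exact ⟨h1_pos hα₁ hα₂ hβ₁ hβ₂ ihm.1 ihm.2.1,
          ⟨(h_basic hα₁ hα₂ hβ₁ hβ₂ ihm.1.le ihm.2.1).2.2.1,
           (h_basic hα₁ hα₂ hβ₁ hβ₂ ihm.1.le ihm.2.1).2.2.2⟩⟩
  -- the inductive product bound
  have claim : ∀ j, j ≤ k →
      (∏ i ∈ Finset.range j, (φ * (1-ε)^4 * psi (β₂ * (tmap α₂ β₂)^[i] q.2))) * q.1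
        ≤ ((hmap α₁ α₂ β₁ β₂)^[j] q).1 := by
    intro j
    induction j with
    | zero => intro _; simp
    | succ m ihm =>
        intro hm
        have hmk : m ≤ k := by omega
        have ihm' := ihm (by omega)
        set p := (hmap α₁ α₂ β₁ β₂)^[m] q with hp_def
        have hp1 : 0 < p.1 := (hiter m).1
        have hp2 : 0 ≤ p.2 := (hiter m).2.1
        have hpη : p.1 ≤ η := hbound m (by omega)
        -- tracking
        have hq0η : q.1 ≤ η := by
          have h00 := hbound 0 (by omega)
          rwa [Function.iterate_zero_apply] at h00
        have hqη : q.1 ≤ η₁ := le_trans hq0η (min_le_left _ _)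
        have htr := htrack q hq1.le hqη hq2 m (by omega)
        have htr2 : |p.2 - (tmap α₂ β₂)^[m] q.2| ≤ δ₂ := by
          have hsnd0 : dist ((hmap α₁ α₂ β₁ β₂)^[m] q).2 ((hmap α₁ α₂ β₁ β₂)^[m] (0, q.2)).2
              ≤ dist ((hmap α₁ α₂ β₁ β₂)^[m] q) ((hmap α₁ α₂ β₁ β₂)^[m] (0, q.2)) := by
            rw [Prod.dist_eq]; exact le_max_right _ _
          have hsnd := le_trans hsnd0 htr
          rw [hmap_axis_iter hα₁ hα₂ hβ₁ hβ₂ q.2 m] at hsnd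
          rw [← Real.dist_eq]
          exact hsnd
        set τ := (tmap α₂ β₂)^[m] q.2 with hτ_def
        have hτmem : τ ∈ Set.Icc (0:ℝ) (pbar α₂) := tmap_iter_mem hα₁ hα₂ hβ₁ hβ₂ hq2 m
        have hψτ : ψm ≤ psi (β₂ * τ) := hψj τ hτmem
        -- psi comparison
        have hpsicmp : psi (β₂ * τ) - β₂ * δ₂ ≤ psi (β₂ * p.2) := by
          have habs := psi_abs_lip (mul_nonneg hβ₂.le hp2) (mul_nonneg hβ₂.le hτmem.1)
          have h8 : |β₂ * p.2 - β₂ * τ| = β₂ * |p.2 - τ| := by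
            rw [← mul_sub, abs_mul, abs_of_nonneg hβ₂.le]
          rw [h8] at habs
          have h9 : β₂ * |p.2 - τ| ≤ β₂ * δ₂ := mul_le_mul_of_nonneg_left htr2 hβ₂.le
          have := abs_le.1 (le_trans habs h9)
          linarith [this.1, this.2]
        have hβδ : β₂ * δ₂ = ε * ψm / 2 := by
          rw [hδ₂_def]; field_simp
        -- one-step bound
        have hstep := step_lb hα₁ hα₂ hβ₁ hβ₂ hp1 hp2 hpη hβη1
        have hfactor : φ * (1-ε)^4 * psi (β₂ * τ) ≤
            (1 - α₁) * β₁ * (1 - β₁*η)^3 * (psi (β₂ * p.2) - β₁*η) := by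
          have hA1 : (1-ε)^3 ≤ (1 - β₁*η)^3 :=
            pow_le_pow_left₀ (by linarith) (by linarith) 3
          have hA2 : (1-ε) * psi (β₂ * τ) ≤ psi (β₂ * p.2) - β₁*η := by
            have h10 : psi (β₂ * τ) - ε * ψm ≤ psi (β₂ * p.2) - β₁*η := by
              have := hpsicmp
              rw [hβδ] at this
              linarith
            have h11 : (1-ε) * psi (β₂ * τ) ≤ psi (β₂ * τ) - ε * ψm := by
              have : ε * ψm ≤ ε * psi (β₂ * τ) := mul_le_mul_of_nonneg_left hψτ hε0.le
              nlinarith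
            linarith
          have hA3 : (0:ℝ) ≤ (1-ε) * psi (β₂ * τ) :=
            mul_nonneg (by linarith) (psi_pos (mul_nonneg hβ₂.le hτmem.1)).le
          have hA4 : (0:ℝ) ≤ (1-ε)^3 := pow_nonneg (by linarith) 3
          calc φ * (1-ε)^4 * psi (β₂ * τ) = φ * ((1-ε)^3 * ((1-ε) * psi (β₂ * τ))) := by ring
            _ ≤ φ * ((1 - β₁*η)^3 * (psi (β₂ * p.2) - β₁*η)) := by
                apply mul_le_mul_of_nonneg_left _ hφ.le
                exact mul_le_mul hA1 hA2 hA3 (pow_nonneg (by linarith) 3)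
            _ = (1 - α₁) * β₁ * (1 - β₁*η)^3 * (psi (β₂ * p.2) - β₁*η) := by
                rw [hφdef]; ring
        have hmono : φ * (1-ε)^4 * psi (β₂ * τ) * p.1 ≤
            ((hmap α₁ α₂ β₁ β₂)^[m+1] q).1 := by
          rw [Function.iterate_succ_apply', ← hp_def]
          calc φ * (1-ε)^4 * psi (β₂ * τ) * p.1
              ≤ (1 - α₁) * β₁ * (1 - β₁*η)^3 * (psi (β₂ * p.2) - β₁*η) * p.1 :=
                mul_le_mul_of_nonneg_right hfactor hp1.le
            _ ≤ (hmap α₁ α₂ β₁ β₂ p).1 := hstep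
        have hfac0 : 0 ≤ φ * (1-ε)^4 * psi (β₂ * τ) :=
          mul_nonneg (mul_nonneg hφ.le (pow_nonneg (by linarith) 4))
            (psi_pos (mul_nonneg hβ₂.le hτmem.1)).le
        calc (∏ i ∈ Finset.range (m+1), (φ * (1-ε)^4 * psi (β₂ * (tmap α₂ β₂)^[i] q.2))) * q.1
            = (φ * (1-ε)^4 * psi (β₂ * τ)) *
              ((∏ i ∈ Finset.range m, (φ * (1-ε)^4 * psi (β₂ * (tmap α₂ β₂)^[i] q.2))) * q.1) := by
              rw [Finset.prod_range_succ]; ring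
          _ ≤ (φ * (1-ε)^4 * psi (β₂ * τ)) * ((hmap α₁ α₂ β₁ β₂)^[m] q).1 :=
              mul_le_mul_of_nonneg_left ihm' hfac0
          _ ≤ ((hmap α₁ α₂ β₁ β₂)^[m+1] q).1 := by
              have : (φ * (1-ε)^4 * psi (β₂ * τ)) * ((hmap α₁ α₂ β₁ β₂)^[m] q).1
                  = φ * (1-ε)^4 * psi (β₂ * τ) * p.1 := by rw [hp_def]
              rw [this]
              exact hmono
  -- conclude
  refine ⟨k, hk1, hkkb, ?_⟩
  have hfinal := claim k le_rfl
  have hCk : ρ ≤ ∏ i ∈ Finset.range k, (φ * (1-ε)^4 * psi (β₂ * (tmap α₂ β₂)^[i] q.2)) := by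
    have hsplit : ∏ i ∈ Finset.range k, (φ * (1-ε)^4 * psi (β₂ * (tmap α₂ β₂)^[i] q.2))
        = (φ * (1-ε)^4)^k * ∏ i ∈ Finset.range k, psi (β₂ * (tmap α₂ β₂)^[i] q.2) := by
      rw [Finset.prod_mul_distrib, Finset.prod_const, Finset.card_range]
    have hc0 : (0:ℝ) ≤ (φ * (1-ε)^4)^k :=
      pow_nonneg (mul_nonneg hφ.le (pow_nonneg (by linarith) 4)) k
    have hρk : ρ^k = (φ * (1-ε)^4)^k * s^k := by
      have hre : ρ = (φ * (1-ε)^4) * s := by rw [hρ_def]; ring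
      rw [hre, mul_pow]
    calc ρ ≤ ρ^k := le_self_pow₀ hρ.le (by omega)
      _ = (φ * (1-ε)^4)^k * s^k := hρk
      _ ≤ (φ * (1-ε)^4)^k * ∏ i ∈ Finset.range k, psi (β₂ * (tmap α₂ β₂)^[i] q.2) :=
          mul_le_mul_of_nonneg_left hprod.le hc0
      _ = _ := hsplit.symm
  calc ρ * q.1 ≤ (∏ i ∈ Finset.range k, (φ * (1-ε)^4 * psi (β₂ * (tmap α₂ β₂)^[i] q.2))) * q.1 :=
        mul_le_mul_of_nonneg_right hCk hq1.le
    _ ≤ _ := hfinal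

end window

set_option maxHeartbeats 2000000 in
theorem stmt12 (α₁ α₂ β₁ β₂ : ℝ)
    (hα₁ : α₁ ∈ Set.Ico (0 : ℝ) 1) (hα₂ : α₂ ∈ Set.Ico (0 : ℝ) 1)
    (hβ₁ : 0 < β₁) (hβ₂ : 0 < β₂)
    (hσ : 1 < (1 - α₁) * β₁ * sigma α₂ β₂)
    (p0 : ℝ × ℝ) (hp01 : p0.1 ∈ Set.Ioo (0 : ℝ) 1) (hp02 : p0.2 ∈ Set.Ioo (0 : ℝ) 1)
    (hsum : p0.1 + p0.2 ≤ 1) :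
    ∃ cbar : ℝ, 0 < cbar ∧ cbar < p0.1 ∧
      ∀ c : ℝ, 0 < c → c ≤ cbar → ∃ kbar : ℕ, ∀ n : ℕ,
        c ≤ ((hmap α₁ α₂ β₁ β₂)^[n] p0).1 →
        ∃ k ≤ kbar, 3 / (2 * rconst α₁ α₂ β₁ β₂) * c < ((hmap α₁ α₂ β₁ β₂)^[n + k] p0).1 := by
  obtain ⟨ρ, hρ, kb, hkb1, η, hη0, hη1, hwin⟩ := window hα₁ hα₂ hβ₁ hβ₂ hσ
  set M := 3 / (2 * rconst α₁ α₂ β₁ β₂) with hM_def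
  -- iterate invariants
  have hiter : ∀ n : ℕ, 0 < ((hmap α₁ α₂ β₁ β₂)^[n] p0).1 ∧
      0 ≤ ((hmap α₁ α₂ β₁ β₂)^[n] p0).2 := by
    intro n
    induction n with
    | zero => exact ⟨hp01.1, hp02.1.le⟩
    | succ m ihm =>
        rw [Function.iterate_succ_apply']
        exact ⟨h1_pos hα₁ hα₂ hβ₁ hβ₂ ihm.1 ihm.2,
          (h_basic hα₁ hα₂ hβ₁ hβ₂ ihm.1.le ihm.2).2.2.1⟩
  have hiter2 : ∀ n : ℕ, 1 ≤ n → ((hmap α₁ α₂ β₁ β₂)^[n] p0).2 ∈ Set.Icc 0 (pbar α₂) := by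
    intro n hn
    obtain ⟨m, rfl⟩ : ∃ m, n = m + 1 := ⟨n - 1, by omega⟩
    rw [Function.iterate_succ_apply']
    exact ⟨(h_basic hα₁ hα₂ hβ₁ hβ₂ (hiter m).1.le (hiter m).2).2.2.1,
      (h_basic hα₁ hα₂ hβ₁ hβ₂ (hiter m).1.le (hiter m).2).2.2.2⟩
  have hmax0 : (0:ℝ) < max M 1 := lt_of_lt_of_le one_pos (le_max_right _ _)
  set cbar := min (min (p0.1/2) (((hmap α₁ α₂ β₁ β₂)^[1] p0).1)) (min 1 (η/(max M 1)))
    with hcbar_def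
  have hcbar0 : 0 < cbar := by
    apply lt_min (lt_min (by linarith [hp01.1]) (hiter 1).1)
    exact lt_min one_pos (by positivity)
  have hcbarlt : cbar < p0.1 := by
    calc cbar ≤ p0.1/2 := le_trans (min_le_left _ _) (min_le_left _ _)
      _ < p0.1 := by linarith [hp01.1]
  refine ⟨cbar, hcbar0, hcbarlt, ?_⟩
  intro c hc hccbar
  obtain ⟨J, hJ⟩ := pow_unbounded_of_one_lt M hρ
  refine ⟨kb * J + 1, ?_⟩
  intro n hn
  rcases le_or_gt M 0 with hM0 | hM0
  · refine ⟨0, by omega, ?_⟩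
    rw [add_zero]
    calc M * c ≤ 0 := mul_nonpos_of_nonpos_of_nonneg hM0 hc.le
      _ < c := hc
      _ ≤ _ := hn
  · by_contra hcon
    push_neg at hcon
    have hMcη : M * c ≤ η := by
      have h1 : c ≤ η/(max M 1) :=
        le_trans hccbar (le_trans (min_le_right _ _) (min_le_right _ _))
      have h2 : M * c ≤ M * (η/(max M 1)) := mul_le_mul_of_nonneg_left h1 hM0.le
      have h3 : M * (η/(max M 1)) ≤ (max M 1) * (η/(max M 1)) :=
        mul_le_mul_of_nonneg_right (le_max_left _ _) (by positivity)
      have h4 : (max M 1) * (η/(max M 1)) = η := by field_simp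
      linarith
    -- the main auxiliary contradiction
    have aux : ∀ n₁ : ℕ, 1 ≤ n₁ → c ≤ ((hmap α₁ α₂ β₁ β₂)^[n₁] p0).1 →
        (∀ k, k ≤ kb*J → ((hmap α₁ α₂ β₁ β₂)^[n₁+k] p0).1 ≤ M*c) → False := by
      intro n₁ hn₁ hcn₁ hupper
      have chain : ∀ j, j ≤ J → ∃ d : ℕ, d ≤ kb*j ∧
          ρ^j * c ≤ ((hmap α₁ α₂ β₁ β₂)^[n₁+d] p0).1 := by
        intro j
        induction j with
        | zero =>
            intro _
            refine ⟨0, by omega, ?_⟩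
            rw [pow_zero, one_mul, add_zero]
            exact hcn₁
        | succ m ihm =>
            intro hm
            obtain ⟨d, hd, hdbound⟩ := ihm (by omega)
            have hq1 : 0 < ((hmap α₁ α₂ β₁ β₂)^[n₁+d] p0).1 := (hiter (n₁+d)).1
            have hq2 : ((hmap α₁ α₂ β₁ β₂)^[n₁+d] p0).2 ∈ Set.Icc 0 (pbar α₂) :=
              hiter2 (n₁+d) (by omega)
            have hbound : ∀ i, i ≤ kb →
                (((hmap α₁ α₂ β₁ β₂)^[i]) ((hmap α₁ α₂ β₁ β₂)^[n₁+d] p0)).1 ≤ η := by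
              intro i hi
              rw [← Function.iterate_add_apply]
              have he : i + (n₁ + d) = n₁ + (d + i) := by omega
              rw [he]
              refine le_trans (hupper (d+i) ?_) hMcη
              have : kb * m + kb ≤ kb * J := by
                have : m + 1 ≤ J := hm
                calc kb * m + kb = kb * (m+1) := by ring
                  _ ≤ kb * J := Nat.mul_le_mul_left kb hm
              omega
            obtain ⟨k, hk1, hkkb, hgrow⟩ := hwin ((hmap α₁ α₂ β₁ β₂)^[n₁+d] p0) hq1 hq2 hbound
            refine ⟨d + k, ?_, ?_⟩
            · calc d + k ≤ kb * m + kb := by omega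
                _ = kb * (m+1) := by ring
            · rw [← Function.iterate_add_apply] at hgrow
              have he : k + (n₁ + d) = n₁ + (d + k) := by omega
              rw [he] at hgrow
              calc ρ^(m+1) * c = ρ * (ρ^m * c) := by ring
                _ ≤ ρ * ((hmap α₁ α₂ β₁ β₂)^[n₁+d] p0).1 :=
                    mul_le_mul_of_nonneg_left hdbound (by linarith)
                _ ≤ _ := hgrow
      obtain ⟨d, hd, hdbound⟩ := chain J le_rfl
      have hup := hupper d hd
      have : M * c < ρ^J * c := mul_lt_mul_of_pos_right hJ hc
      linarith
    rcases Nat.eq_zero_or_pos n with rfl | hn1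
    · apply aux 1 le_rfl
      · exact le_trans hccbar (le_trans (min_le_left _ _) (min_le_right _ _))
      · intro k hk
        have h5 := hcon (1+k) (by omega)
        rw [show (0:ℕ) + (1+k) = 1 + k by omega] at h5
        exact h5
    · apply aux n hn1 hn
      intro k hk
      exact hcon k (by omega)
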